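/- For a uniquely decodable binary prefix code with codeword lengths l_1, …, l_m, the Kraft inequality ∑_i 2^{−l_i} ≤ 1 holds; conversely, for any lengths l_1,…,l_m satisfying ∑_i 2^{−l_i} ≤ 1 there exists a binary prefix code with exactly these codeword lengths. -/
import Mathlib

open Finset

/-- All binary strings of length `k`, as a Finset. -/
noncomputable def kraftFull (k : ℕ) : Finset (List Bool) :=
  (Finset.univ : Finset (Fin k → Bool)).image List.ofFn

lemma kraftFull_card (k : ℕ) : (kraftFull k).card = 2 ^ k := by
  rw [kraftFull, Finset.card_image_of_injective _ List.ofFn_injective]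
  simp [Finset.card_univ]

lemma mem_kraftFull {k : ℕ} {x : List Bool} : x ∈ kraftFull k ↔ x.length = k := by
  constructor
  · intro hx
    rcases Finset.mem_image.1 hx with ⟨f, _, rfl⟩
    simp
  · intro hx
    refine Finset.mem_image.2 ⟨fun i => x.get (Fin.cast hx.symm i), Finset.mem_univ _, ?_⟩
    apply List.ext_get (by simp [hx])
    intro n h1 h2
    simp [List.get_ofFn]

/-- The Finset of length-`N` extensions of `w`. -/
noncomputable def kraftExt (w : List Bool) (N : ℕ) : Finset (List Bool) :=
  (kraftFull (N - w.length)).image (fun t => w ++ t)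

lemma kraftExt_card (w : List Bool) (N : ℕ) :
    (kraftExt w N).card = 2 ^ (N - w.length) := by
  rw [kraftExt, Finset.card_image_of_injective _ (List.append_right_injective w),
    kraftFull_card]

lemma kraftExt_subset {w : List Bool} {N : ℕ} (h : w.length ≤ N) :
    kraftExt w N ⊆ kraftFull N := by
  intro x hx
  rcases Finset.mem_image.1 hx with ⟨t, ht, rfl⟩
  rw [mem_kraftFull] at ht ⊢
  simp [ht, Nat.add_sub_cancel' h]

lemma mem_kraftExt_iff {w x : List Bool} {N : ℕ} (hw : w.length ≤ N) (hx : x.length = N) :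
    x ∈ kraftExt w N ↔ w <+: x := by
  constructor
  · intro h
    rcases Finset.mem_image.1 h with ⟨t, _, rfl⟩
    exact ⟨t, rfl⟩
  · rintro ⟨t, rfl⟩
    refine Finset.mem_image.2 ⟨t, ?_, rfl⟩
    rw [mem_kraftFull]
    simp at hx
    omega

/-- Counting lemma for direction (a). -/
lemma kraft_count (m N : ℕ) (c : Fin m → List Bool)
    (hlen : ∀ i, (c i).length ≤ N)
    (hinj : Function.Injective c)
    (hpf : ∀ i j, i ≠ j → ¬ c i <+: c j) :
    ∑ i, 2 ^ (N - (c i).length) ≤ 2 ^ N := by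
  classical
  have hdisj : ∀ i ∈ (univ : Finset (Fin m)), ∀ j ∈ (univ : Finset (Fin m)), i ≠ j →
      Disjoint (kraftExt (c i) N) (kraftExt (c j) N) := by
    intro i _ j _ hij
    rw [Finset.disjoint_left]
    intro x hxi hxj
    have hxN : x.length = N := mem_kraftFull.1 (kraftExt_subset (hlen i) hxi)
    have h1 : c i <+: x := (mem_kraftExt_iff (hlen i) hxN).1 hxi
    have h2 : c j <+: x := (mem_kraftExt_iff (hlen j) hxN).1 hxj
    rcases List.prefix_or_prefix_of_prefix h1 h2 with h | h
    · exact hpf i j hij h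
    · exact hpf j i (Ne.symm hij) h
  calc ∑ i, 2 ^ (N - (c i).length) = ∑ i, (kraftExt (c i) N).card := by
        simp [kraftExt_card]
    _ = (Finset.univ.biUnion (fun i => kraftExt (c i) N)).card :=
        (Finset.card_biUnion hdisj).symm
    _ ≤ (kraftFull N).card := by
        apply Finset.card_le_card
        intro x hx
        rcases Finset.mem_biUnion.1 hx with ⟨i, _, hxi⟩
        exact kraftExt_subset (hlen i) hxi
    _ = 2 ^ N := kraftFull_card N

/-- Existence of a free string for direction (b). -/
lemma kraft_free (m N : ℕ) (c : Fin m → List Bool)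
    (hlen : ∀ i, (c i).length ≤ N)
    (hcard : ∑ i, 2 ^ (N - (c i).length) < 2 ^ N) :
    ∃ x : List Bool, x.length = N ∧ ∀ i, ¬ c i <+: x := by
  classical
  set S : Finset (List Bool) := Finset.univ.biUnion (fun i => kraftExt (c i) N) with hS
  have hScard : S.card < (kraftFull N).card := by
    calc S.card ≤ ∑ i, (kraftExt (c i) N).card := Finset.card_biUnion_le
    _ = ∑ i, 2 ^ (N - (c i).length) := by simp [kraftExt_card]
    _ < 2 ^ N := hcard
    _ = (kraftFull N).card := (kraftFull_card N).symm
  have : ¬ kraftFull N ⊆ S := fun h => absurd (Finset.card_le_card h) (by omega)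
  rcases Finset.not_subset.1 this with ⟨x, hxF, hxS⟩
  have hxN : x.length = N := mem_kraftFull.1 hxF
  refine ⟨x, hxN, fun i hi => hxS ?_⟩
  exact Finset.mem_biUnion.2 ⟨i, Finset.mem_univ _, (mem_kraftExt_iff (hlen i) hxN).2 hi⟩

/-- Direction (a) of Kraft's inequality. -/
lemma kraft_forward (m : ℕ) (c : Fin m → List Bool) (hinj : Function.Injective c)
    (hpf : ∀ i j, i ≠ j → ¬ c i <+: c j) :
    ∑ i, ((2 : ℝ)⁻¹) ^ (c i).length ≤ 1 := by
  set N : ℕ := Finset.univ.sup (fun i => (c i).length) with hN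
  have hlen : ∀ i, (c i).length ≤ N := fun i => Finset.le_sup (f := fun i => (c i).length) (Finset.mem_univ i)
  have hnat : ∑ i, 2 ^ (N - (c i).length) ≤ 2 ^ N := kraft_count m N c hlen hinj hpf
  have hterm : ∀ i, ((2 : ℝ)⁻¹) ^ (c i).length = (2 ^ (N - (c i).length) : ℕ) / (2 : ℝ) ^ N := by
    intro i
    have h2 : (2 : ℝ) ^ (N - (c i).length) * 2 ^ (c i).length = 2 ^ N := by
      rw [← pow_add, Nat.sub_add_cancel (hlen i)]
    push_cast
    rw [inv_pow, eq_div_iff (by positivity), ← h2]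
    field_simp
  calc ∑ i, ((2 : ℝ)⁻¹) ^ (c i).length
      = (↑(∑ i, 2 ^ (N - (c i).length)) : ℝ) / 2 ^ N := by
        rw [Finset.sum_div]
        exact Finset.sum_congr rfl fun i _ => by rw [hterm i]; norm_num
    _ ≤ (2 : ℝ) ^ N / 2 ^ N := by
        apply div_le_div_of_nonneg_right ?_ (by positivity) |>.trans_eq rfl
        exact_mod_cast hnat
    _ = 1 := by field_simp

/-- Direction (b) of Kraft's inequality. -/
lemma kraft_backward : ∀ (m : ℕ) (L : Fin m → ℕ), ∑ i, ((2 : ℝ)⁻¹) ^ L i ≤ 1 →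
    ∃ c : Fin m → List Bool, Function.Injective c ∧
      (∀ i j, i ≠ j → ¬ c i <+: c j) ∧ ∀ i, (c i).length = L i := by
  intro m
  induction m with
  | zero =>
    intro L _
    exact ⟨fun i => i.elim0, fun i => i.elim0, fun i => i.elim0, fun i => i.elim0⟩
  | succ n ih =>
    intro L hsum
    classical
    obtain ⟨i₀, -, hmax⟩ := Finset.exists_max_image (Finset.univ : Finset (Fin (n+1))) L
      ⟨0, Finset.mem_univ 0⟩
    have hmax' : ∀ j, L j ≤ L i₀ := fun j => hmax j (Finset.mem_univ j)
    set N := L i₀ with hNdef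
    set L' : Fin n → ℕ := fun k => L (i₀.succAbove k) with hL'
    have hsplit : ∑ i, ((2 : ℝ)⁻¹) ^ L i
        = ((2 : ℝ)⁻¹) ^ N + ∑ k, ((2 : ℝ)⁻¹) ^ L' k :=
      Fin.sum_univ_succAbove (fun i => ((2 : ℝ)⁻¹) ^ L i) i₀
    have hsum' : ∑ k, ((2 : ℝ)⁻¹) ^ L' k ≤ 1 - ((2 : ℝ)⁻¹) ^ N := by
      rw [hsplit] at hsum; linarith
    have hle1 : ∑ k, ((2 : ℝ)⁻¹) ^ L' k ≤ 1 := by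
      have : (0:ℝ) ≤ ((2 : ℝ)⁻¹) ^ N := by positivity
      linarith
    obtain ⟨c, hcinj, hcpf, hclen⟩ := ih L' hle1
    have hlenN : ∀ k, (c k).length ≤ N := fun k => by
      rw [hclen k]; exact hmax' _
    -- strict counting bound
    have hnat : ∑ k, 2 ^ (N - (c k).length) < 2 ^ N := by
      have hreal : (↑(∑ k, 2 ^ (N - (c k).length)) : ℝ) ≤ 2 ^ N - 1 := by
        have hterm : ∀ k, ((2:ℕ) ^ (N - (c k).length) : ℝ)
            = ((2 : ℝ)⁻¹) ^ L' k * 2 ^ N := by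
          intro k
          have h2 : (2 : ℝ) ^ (N - (c k).length) * 2 ^ (c k).length = 2 ^ N := by
            rw [← pow_add, Nat.sub_add_cancel (hlenN k)]
          rw [← hclen k, inv_pow, ← h2]
          push_cast
          field_simp
        push_cast
        calc ∑ k, ((2:ℝ) ^ (N - (c k).length))
            = (∑ k, ((2 : ℝ)⁻¹) ^ L' k) * 2 ^ N := by
              rw [Finset.sum_mul]
              exact Finset.sum_congr rfl (fun k _ => by
                have := hterm k; push_cast at this; rw [this])
          _ ≤ (1 - ((2 : ℝ)⁻¹) ^ N) * 2 ^ N := by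
              apply mul_le_mul_of_nonneg_right hsum' (by positivity)
          _ = 2 ^ N - 1 := by
              rw [sub_mul, one_mul, inv_pow, inv_mul_cancel₀ (by positivity)]
      have h1 : (1:ℝ) ≤ 2 ^ N := one_le_pow₀ (by norm_num)
      have : (↑(∑ k, 2 ^ (N - (c k).length)) : ℝ) < (↑(2 ^ N : ℕ) : ℝ) := by
        push_cast; linarith
      exact_mod_cast this
    obtain ⟨x, hxN, hxfree⟩ := kraft_free n N c hlenN hnat
    -- x is incomparable with every c k
    have hxne : ∀ k, x ≠ c k := by
      intro k h
      exact hxfree k (h ▸ List.prefix_refl _)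
    have hxnp : ∀ k, ¬ x <+: c k := by
      intro k h
      have := h.eq_of_length_le (by rw [hxN]; exact hlenN k)
      exact hxne k this
    set C : Fin (n+1) → List Bool := i₀.insertNth x c with hC
    have hCi₀ : C i₀ = x := by rw [hC]; exact Fin.insertNth_apply_same (α := fun _ => List Bool) i₀ x c
    have hCsa : ∀ k, C (i₀.succAbove k) = c k := fun k => by
      rw [hC]; exact Fin.insertNth_apply_succAbove (α := fun _ => List Bool) i₀ x c k
    have hcase : ∀ j : Fin (n+1), j = i₀ ∨ ∃ k, j = i₀.succAbove k := by
      intro j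
      by_cases h : j = i₀
      · exact Or.inl h
      · rcases Fin.exists_succAbove_eq h with ⟨k, hk⟩
        exact Or.inr ⟨k, hk.symm⟩
    refine ⟨C, ?_, ?_, ?_⟩
    · intro a b hab
      rcases hcase a with rfl | ⟨k, rfl⟩ <;> rcases hcase b with rfl | ⟨k', rfl⟩
      · rfl
      · rw [hCi₀, hCsa] at hab; exact absurd hab (hxne k')
      · rw [hCi₀, hCsa] at hab; exact absurd hab.symm (hxne k)
      · rw [hCsa, hCsa] at hab
        exact congrArg _ (hcinj hab)
    · intro a b hne
      rcases hcase a with rfl | ⟨k, rfl⟩ <;> rcases hcase b with rfl | ⟨k', rfl⟩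
      · exact absurd rfl hne
      · rw [hCi₀, hCsa]; exact hxnp k'
      · rw [hCi₀, hCsa]; exact hxfree k
      · rw [hCsa, hCsa]
        exact hcpf k k' (fun h => hne (congrArg _ h))
    · intro j
      rcases hcase j with rfl | ⟨k, rfl⟩
      · rw [hCi₀, hxN]
      · rw [hCsa, hclen]

/-- Kraft's inequality, both directions, for binary prefix codes on `m` symbols.
(a) Every binary prefix code (injective, no codeword a prefix of another) with
codeword lengths `l_i` satisfies `∑ i, 2^{-l_i} ≤ 1`.
(b) Conversely, any lengths satisfying `∑ i, 2^{-l_i} ≤ 1` are realized by some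
binary prefix code. -/
theorem kraft_inequality (m : ℕ) :
    (∀ c : Fin m → List Bool, Function.Injective c →
        (∀ i j, i ≠ j → ¬ c i <+: c j) →
        ∑ i, ((2 : ℝ)⁻¹) ^ (c i).length ≤ 1) ∧
    (∀ L : Fin m → ℕ, ∑ i, ((2 : ℝ)⁻¹) ^ L i ≤ 1 →
        ∃ c : Fin m → List Bool, Function.Injective c ∧
          (∀ i j, i ≠ j → ¬ c i <+: c j) ∧ ∀ i, (c i).length = L i) := by
  exact ⟨kraft_forward m, kraft_backward m⟩
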